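/- A subspace D of a vector space H is a complement of some subspace commensurable with H⁺ if and only if for every subspace K commensurable with H⁺, both D ∩ K and H/(D + K) are finite-dimensional. -/
import Mathlib


/-- Two subspaces `V, W` of a vector space are commensurable if both
`V/(V ∩ W)` and `W/(V ∩ W)` are finite-dimensional. -/
def Commensurable' {F H : Type*} [Field F] [AddCommGroup H] [Module F H]
    (V W : Submodule F H) : Prop :=
  FiniteDimensional F (V ⧸ (V ⊓ W).comap V.subtype) ∧
    FiniteDimensional F (W ⧸ (V ⊓ W).comap W.subtype)

section Aux

variable {F H : Type*} [Field F] [AddCommGroup H] [Module F H]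

lemma comap_inf_subtype (V W : Submodule F H) :
    (V ⊓ W).comap V.subtype = W.comap V.subtype := by
  ext x
  simp only [Submodule.mem_comap, Submodule.coe_subtype, Submodule.mem_inf]
  exact and_iff_right x.2

lemma commensurable'_iff (V W : Submodule F H) :
    Commensurable' V W ↔
      (FiniteDimensional F (V ⧸ W.comap V.subtype) ∧
        FiniteDimensional F (W ⧸ V.comap W.subtype)) := by
  unfold Commensurable'
  rw [comap_inf_subtype V W, inf_comm V W, comap_inf_subtype W V]

/-- Extension lemma: a vector space with finite-dimensional subspace and
corresponding quotient is finite-dimensional. -/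
lemma fd_of_sub_quot {M : Type*} [AddCommGroup M] [Module F M] (S : Submodule F M)
    (h1 : FiniteDimensional F S) (h2 : FiniteDimensional F (M ⧸ S)) :
    FiniteDimensional F M := by
  have r1 : Module.rank F S < Cardinal.aleph0 := Module.rank_lt_aleph0_iff.mpr h1
  have r2 : Module.rank F (M ⧸ S) < Cardinal.aleph0 := Module.rank_lt_aleph0_iff.mpr h2
  have h := rank_quotient_add_rank_of_divisionRing S
  refine Module.rank_lt_aleph0_iff.mp ?_
  rw [← h]
  exact Cardinal.add_lt_aleph0 r2 r1

/-- Enlarging the denominator preserves finite-dimensionality of the quotient. -/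
lemma qfd_mono {V p q : Submodule F H} (h : p ≤ q)
    (hf : FiniteDimensional F (V ⧸ p.comap V.subtype)) :
    FiniteDimensional F (V ⧸ q.comap V.subtype) := by
  refine FiniteDimensional.of_surjective
    (Submodule.mapQ (p.comap V.subtype) (q.comap V.subtype) LinearMap.id
      (fun x hx => h hx)) ?_
  intro y
  obtain ⟨a, rfl⟩ := Submodule.Quotient.mk_surjective _ y
  exact ⟨Submodule.Quotient.mk a, by simp [Submodule.mapQ_apply]⟩

/-- Restricting the numerator preserves finite-dimensionality of the quotient. -/
lemma qfd_restrict {V V' W : Submodule F H} (h : V' ≤ V)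
    (hf : FiniteDimensional F (V ⧸ W.comap V.subtype)) :
    FiniteDimensional F (V' ⧸ W.comap V'.subtype) := by
  refine FiniteDimensional.of_injective
    (Submodule.mapQ (W.comap V'.subtype) (W.comap V.subtype) (Submodule.inclusion h)
      (fun x hx => by simpa using hx)) ?_
  rw [← LinearMap.ker_eq_bot, LinearMap.ker_eq_bot']
  intro m hm
  obtain ⟨a, rfl⟩ := Submodule.Quotient.mk_surjective _ m
  rw [Submodule.mapQ_apply, Submodule.Quotient.mk_eq_zero] at hm
  rw [Submodule.Quotient.mk_eq_zero]
  simpa using hm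

/-- If `A ⊔ B = C` and `A` is finite-dimensional, then `C/B` is finite-dimensional. -/
lemma qfd_of_sup {A B C : Submodule F H} (hAC : A ≤ C) (h : A ⊔ B = C)
    (hA : FiniteDimensional F A) :
    FiniteDimensional F (C ⧸ B.comap C.subtype) := by
  refine FiniteDimensional.of_surjective
    ((B.comap C.subtype).mkQ.comp (Submodule.inclusion hAC)) ?_
  intro y
  obtain ⟨c, rfl⟩ := Submodule.Quotient.mk_surjective _ y
  have hc : (c : H) ∈ A ⊔ B := by rw [h]; exact c.2
  obtain ⟨a, ha, b, hb, hab⟩ := Submodule.mem_sup.mp hc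
  refine ⟨⟨a, ha⟩, ?_⟩
  simp only [LinearMap.comp_apply, Submodule.mkQ_apply]
  rw [Submodule.Quotient.eq]
  refine Submodule.mem_comap.mpr ?_
  have h2 : C.subtype (Submodule.inclusion hAC ⟨a, ha⟩ - c) = -b := by
    simp only [map_sub, Submodule.coe_subtype, Submodule.coe_inclusion]
    rw [← hab]; abel
  rw [h2]
  exact neg_mem hb

/-- Transitivity for finite-dimensionality of relative quotients. -/
lemma qfd_trans {U V W : Submodule F H}
    (h1 : FiniteDimensional F (U ⧸ V.comap U.subtype))
    (h2 : FiniteDimensional F (V ⧸ W.comap V.subtype)) :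
    FiniteDimensional F (U ⧸ W.comap U.subtype) := by
  set p := W.comap U.subtype with hp
  set g : ↥(U ⊓ V) →ₗ[F] U ⧸ p :=
    p.mkQ.comp (Submodule.inclusion inf_le_left) with hg
  set N := LinearMap.range g with hN
  have hNfd : FiniteDimensional F N := by
    have h2' : FiniteDimensional F (↥(U ⊓ V) ⧸ W.comap (U ⊓ V).subtype) :=
      qfd_restrict inf_le_right h2
    have hker : W.comap (U ⊓ V).subtype ≤ LinearMap.ker g := by
      intro x hx
      simp only [hg, LinearMap.mem_ker, LinearMap.comp_apply, Submodule.mkQ_apply,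
        Submodule.Quotient.mk_eq_zero]
      exact Submodule.mem_comap.mpr (by simpa using hx)
    have : N = LinearMap.range ((W.comap (U ⊓ V).subtype).liftQ g hker) := by
      rw [Submodule.range_liftQ]
    rw [this]
    infer_instance
  have hQfd : FiniteDimensional F ((U ⧸ p) ⧸ N) := by
    have hker2 : V.comap U.subtype ≤ LinearMap.ker (N.mkQ.comp p.mkQ) := by
      intro x hx
      simp only [LinearMap.mem_ker, LinearMap.comp_apply, Submodule.mkQ_apply,
        Submodule.Quotient.mk_eq_zero]
      exact ⟨⟨(x : H), x.2, hx⟩, rfl⟩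
    refine FiniteDimensional.of_surjective
      ((V.comap U.subtype).liftQ (N.mkQ.comp p.mkQ) hker2) ?_
    rw [← LinearMap.range_eq_top, Submodule.range_liftQ, LinearMap.range_eq_top]
    exact (Submodule.Quotient.mk_surjective _).comp (Submodule.Quotient.mk_surjective _)
  exact fd_of_sub_quot N hNfd hQfd

end Aux

/-- Fix a subspace `H⁺` of `H`; call `K` *compact* if it is commensurable with `H⁺`,
and `D` *discrete* if it has a compact complement.  A subspace `D` is discrete if and
only if for every compact subspace `K` both `D ∩ K` and `H/(D + K)` are
finite-dimensional. -/
theorem discrete_iff_fredholm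
    {F H : Type*} [Field F] [AddCommGroup H] [Module F H]
    (Hp D : Submodule F H) :
    (∃ K : Submodule F H, Commensurable' K Hp ∧ IsCompl D K) ↔
      (∀ K : Submodule F H, Commensurable' K Hp →
        FiniteDimensional F ↥(D ⊓ K) ∧ FiniteDimensional F (H ⧸ (D ⊔ K))) := by
  constructor
  · rintro ⟨K₀, hK₀, hcompl⟩ K hK
    rw [commensurable'_iff] at hK₀ hK
    have qKK₀ : FiniteDimensional F (K ⧸ K₀.comap K.subtype) := qfd_trans hK.1 hK₀.2
    have qK₀K : FiniteDimensional F (K₀ ⧸ K.comap K₀.subtype) := qfd_trans hK₀.1 hK.2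
    constructor
    · -- D ⊓ K embeds into K ⧸ (K ∩ K₀)
      refine FiniteDimensional.of_injective
        ((K₀.comap K.subtype).mkQ.comp (Submodule.inclusion inf_le_right)) ?_
      rw [← LinearMap.ker_eq_bot, LinearMap.ker_eq_bot']
      intro m hm
      simp only [LinearMap.comp_apply, Submodule.mkQ_apply,
        Submodule.Quotient.mk_eq_zero, Submodule.mem_comap] at hm
      have hm' : (m : H) ∈ D ⊓ K₀ := ⟨m.2.1, by simpa using hm⟩
      rw [hcompl.inf_eq_bot] at hm'
      exact Subtype.ext (by simpa using hm')
    · -- H ⧸ (D ⊔ K) is a quotient of K₀ ⧸ ((D ⊔ K) ∩ K₀)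
      have h1 : FiniteDimensional F (K₀ ⧸ (D ⊔ K).comap K₀.subtype) :=
        qfd_mono le_sup_right qK₀K
      have hker : (D ⊔ K).comap K₀.subtype ≤
          LinearMap.ker ((D ⊔ K).mkQ.comp K₀.subtype) := by
        intro x hx
        simpa [Submodule.Quotient.mk_eq_zero] using hx
      refine FiniteDimensional.of_surjective
        (((D ⊔ K).comap K₀.subtype).liftQ ((D ⊔ K).mkQ.comp K₀.subtype) hker) ?_
      rw [← LinearMap.range_eq_top, Submodule.range_liftQ]
      rw [LinearMap.range_eq_top]
      intro y
      obtain ⟨h, rfl⟩ := Submodule.Quotient.mk_surjective _ y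
      have hh : h ∈ D ⊔ K₀ := by rw [hcompl.sup_eq_top]; trivial
      obtain ⟨d, hd, k, hk, rfl⟩ := Submodule.mem_sup.mp hh
      refine ⟨⟨k, hk⟩, ?_⟩
      simp only [LinearMap.comp_apply, Submodule.coe_subtype, Submodule.mkQ_apply]
      rw [Submodule.Quotient.eq]
      simpa using Submodule.mem_sup_left hd
  · intro hyp
    have hHpHp : Commensurable' Hp Hp := by
      rw [commensurable'_iff]
      constructor <;>
        exact qfd_of_sup bot_le (bot_sup_eq Hp) inferInstance
    obtain ⟨hDHp, hQ⟩ := hyp Hp hHpHp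
    -- complement of D ⊓ Hp inside Hp
    obtain ⟨q, hq⟩ := Submodule.exists_isCompl ((D ⊓ Hp).comap Hp.subtype)
    set K₁ : Submodule F H := q.map Hp.subtype with hK₁def
    have hK₁Hp : K₁ ≤ Hp := Submodule.map_subtype_le _ _
    have hsup : (D ⊓ Hp) ⊔ K₁ = Hp := by
      have h := congrArg (Submodule.map Hp.subtype) hq.codisjoint.eq_top
      rw [Submodule.map_sup, Submodule.map_comap_subtype, Submodule.map_top,
        Submodule.range_subtype, inf_eq_right.mpr inf_le_right] at h
      exact h
    have hdisj : D ⊓ K₁ = ⊥ := by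
      rw [eq_bot_iff]
      rintro x ⟨hxD, hxK₁⟩
      obtain ⟨y, hyq, rfl⟩ := Submodule.mem_map.mp hxK₁
      have hy : y ∈ (D ⊓ Hp).comap Hp.subtype := Submodule.mem_comap.mpr ⟨hxD, y.2⟩
      have : y ∈ (⊥ : Submodule F Hp) := hq.disjoint.le_bot ⟨hy, hyq⟩
      rw [Submodule.mem_bot] at this
      simp [this]
    have hDK₁ : D ⊔ K₁ = D ⊔ Hp := by
      refine le_antisymm (sup_le le_sup_left (hK₁Hp.trans le_sup_right)) ?_
      refine sup_le le_sup_left ?_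
      rw [← hsup]
      exact sup_le (inf_le_left.trans le_sup_left) le_sup_right
    obtain ⟨W, hW⟩ := Submodule.exists_isCompl (D ⊔ K₁)
    have hWfd : FiniteDimensional F W := by
      have e := Submodule.quotientEquivOfIsCompl (D ⊔ K₁) W hW
      rw [hDK₁] at e
      exact e.finiteDimensional
    refine ⟨K₁ ⊔ W, ?_, ?_⟩
    · rw [commensurable'_iff]
      constructor
      · exact qfd_mono hK₁Hp
          (qfd_of_sup le_sup_right (sup_comm W K₁) hWfd)
      · exact qfd_mono le_sup_left (qfd_of_sup inf_le_right hsup hDHp)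
    · constructor
      · rw [disjoint_iff, eq_bot_iff]
        rintro x ⟨hxD, hxKW⟩
        obtain ⟨k, hk, w, hw, rfl⟩ := Submodule.mem_sup.mp hxKW
        have hwDK : w ∈ D ⊔ K₁ := by
          have : w = (k + w) - k := by abel
          rw [this]
          exact sub_mem (Submodule.mem_sup_left hxD) (Submodule.mem_sup_right hk)
        have hw0 : w = 0 := by
          have := hW.disjoint.le_bot ⟨hwDK, hw⟩
          simpa using this
        rw [hw0, add_zero] at hxD ⊢
        have : k ∈ D ⊓ K₁ := ⟨hxD, hk⟩
        rw [hdisj] at this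
        simpa using this
      · rw [codisjoint_iff, ← sup_assoc]
        exact hW.codisjoint.eq_top
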